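/- arXiv:1910.01874 — 4 statements merged into one kernel-verified Lean document; each statement's English description precedes it below -/
import Mathlib

section
/- Let f ∈ ℂ((x^{-1})) be a formal Laurent series in 1/x with complex coefficients, and suppose f, viewed as a series with coefficients in a field extension C̃ of ℂ, is a rational function with coefficients in C̃, i.e., f ∈ C̃(x). Then f ∈ ℂ(x). In other words, ℂ((x^{-1})) ∩ C̃(x) = ℂ(x) inside C̃((x^{-1})). -/
open Polynomial HahnSeries Finset

/-- Descent for homogeneous linear systems over a field extension of `ℂ`. -/
private lemma descent_aux {k : ℕ} {ι : Type*} (v : ι → Fin k → ℂ)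
    {C : Type*} [Field C] [Algebra ℂ C] (q : Fin k → C) (hq : q ≠ 0)
    (hsol : ∀ i, ∑ j, algebraMap ℂ C (v i j) * q j = 0) :
    ∃ q' : Fin k → ℂ, q' ≠ 0 ∧ ∀ i, ∑ j, v i j * q' j = 0 := by
  by_cases hW : Submodule.span ℂ (Set.range v) = ⊤
  · exfalso
    let L : (Fin k → ℂ) →ₗ[ℂ] C :=
      { toFun := fun u => ∑ j, algebraMap ℂ C (u j) * q j
        map_add' := fun u w => by
          simp [add_mul, Finset.sum_add_distrib]
        map_smul' := fun c u => by
          simp only [Pi.smul_apply, smul_eq_mul, map_mul, RingHom.id_apply, Algebra.smul_def,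
            Finset.mul_sum]
          exact Finset.sum_congr rfl fun j _ => by ring }
    have hker : Submodule.span ℂ (Set.range v) ≤ LinearMap.ker L := by
      rw [Submodule.span_le]
      rintro _ ⟨i, rfl⟩
      exact hsol i
    have hL : ∀ u, L u = 0 := by
      intro u
      have hu : u ∈ Submodule.span ℂ (Set.range v) := by rw [hW]; exact Submodule.mem_top
      exact LinearMap.mem_ker.mp (hker hu)
    apply hq
    funext j
    have h1 := hL (Pi.single j 1)
    have h2 : (L (Pi.single j 1) : C) = q j := by
      simp only [L, LinearMap.coe_mk, AddHom.coe_mk]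
      rw [Finset.sum_eq_single j]
      · simp
      · intro b _ hb
        rw [Pi.single_eq_of_ne hb]
        simp
      · simp
    rw [h1] at h2
    exact h2.symm
  · obtain ⟨φ, hφ0, hmap⟩ := Submodule.exists_dual_map_eq_bot_of_lt_top
      (lt_top_iff_ne_top.mpr hW) inferInstance
    set e : Fin k → (Fin k → ℂ) := fun j j' => if j = j' then 1 else 0 with hedef
    have hrepr : ∀ u : Fin k → ℂ, φ u = ∑ j, u j * φ (e j) := by
      intro u
      rw [LinearMap.pi_apply_eq_sum_univ φ u]
      exact Finset.sum_congr rfl fun j _ => by rw [smul_eq_mul]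
    refine ⟨fun j => φ (e j), ?_, ?_⟩
    · intro h0
      apply hφ0
      apply LinearMap.ext
      intro u
      rw [hrepr u]
      simp only [LinearMap.zero_apply]
      refine Finset.sum_eq_zero fun j _ => ?_
      have : φ (e j) = 0 := congrFun h0 j
      rw [this, mul_zero]
    · intro i
      have hv : v i ∈ Submodule.span ℂ (Set.range v) := Submodule.subset_span ⟨i, rfl⟩
      have hφv : φ (v i) = 0 := by
        have : φ (v i) ∈ (Submodule.span ℂ (Set.range v)).map φ :=
          Submodule.mem_map_of_mem hv
        rw [hmap] at this
        simpa using this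
      rw [hrepr (v i)] at hφv
      exact hφv

/-- coefficient of a Laurent series times a finite sum of singles -/
private lemma coeff_mul_singles {F : Type*} [Field F] (g : LaurentSeries F)
    {k : ℕ} (c : Fin k → F) (n : ℤ) :
    (g * ∑ j : Fin k, HahnSeries.single ((j : ℕ) : ℤ) (c j)).coeff n
      = ∑ j : Fin k, g.coeff (n - (j : ℕ)) * c j := by
  rw [Finset.mul_sum]
  rw [show ((∑ j : Fin k, g * HahnSeries.single ((j : ℕ) : ℤ) (c j)).coeff n)
      = ∑ j : Fin k, (g * HahnSeries.single ((j : ℕ) : ℤ) (c j)).coeff n from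
    map_sum (HahnSeries.coeff.addMonoidHom n) _ _]
  refine Finset.sum_congr rfl fun j _ => ?_
  have := HahnSeries.coeff_mul_single_add (r := c j) (x := g)
    (b := ((j : ℕ) : ℤ)) (a := n - (j : ℕ))
  rwa [sub_add_cancel] at this

/-- a polynomial, coerced to Laurent series, as a sum of singles -/
private lemma poly_coe_eq_sum_singles {F : Type*} [Field F] (p : Polynomial F)
    {k : ℕ} (hp : p.natDegree < k) :
    ((p : PowerSeries F) : LaurentSeries F)
      = ∑ j : Fin k, HahnSeries.single ((j : ℕ) : ℤ) (p.coeff j) := by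
  conv_lhs => rw [p.as_sum_range' k hp]
  simp only [← Polynomial.coeToPowerSeries.ringHom_apply, map_sum]
  rw [← Fin.sum_univ_eq_sum_range (fun i => (HahnSeries.ofPowerSeries ℤ F)
    (Polynomial.coeToPowerSeries.ringHom (Polynomial.monomial i (p.coeff i)))) k]
  refine Finset.sum_congr rfl fun j _ => ?_
  rw [Polynomial.coeToPowerSeries.ringHom_apply, Polynomial.coe_monomial]
  rw [show (PowerSeries.monomial (j : ℕ)) (p.coeff j)
      = PowerSeries.C (p.coeff j) * PowerSeries.X ^ (j : ℕ) by
    rw [PowerSeries.X_pow_eq, PowerSeries.monomial_eq_mk]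
    ext n
    simp [PowerSeries.coeff_monomial, PowerSeries.coeff_C_mul]]
  rw [map_mul, HahnSeries.ofPowerSeries_C, HahnSeries.ofPowerSeries_X_pow]
  rw [HahnSeries.C_apply, HahnSeries.single_mul_single, zero_add, mul_one]

private lemma poly_coe_coeff_eq_zero {F : Type*} [Field F] (p : Polynomial F) {n : ℤ}
    (hn : n < 0 ∨ (p.natDegree : ℤ) < n) :
    ((p : PowerSeries F) : LaurentSeries F).coeff n = 0 := by
  rw [PowerSeries.coeff_coe]
  rcases hn with hn | hn
  · rw [if_pos hn]
  · have h0 : ¬ n < 0 := by omega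
    rw [if_neg h0, Polynomial.coeff_coe]
    apply Polynomial.coeff_eq_zero_of_natDegree_lt
    omega

/-- Descent for Laurent series: let `C` be a field extension of `ℂ` and let
`f` be a formal Laurent series with complex coefficients (in the variable
`X = x⁻¹`; note `ℂ(x) = ℂ(x⁻¹)`, so rationality in `x` is rationality in
`x⁻¹`). If `f`, viewed with coefficients in `C`, is (the Laurent expansion
of) a rational function over `C`, then `f` is a rational function over `ℂ`:
`ℂ((x⁻¹)) ∩ C(x) = ℂ(x)` inside `C((x⁻¹))`. -/
theorem stmt3 {C : Type*} [Field C] [Algebra ℂ C]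
    (f : LaurentSeries ℂ)
    (h : ∃ r : RatFunc C, ∀ m : ℤ,
      (r : LaurentSeries C).coeff m = algebraMap ℂ C (f.coeff m)) :
    ∃ s : RatFunc ℂ, (s : LaurentSeries ℂ) = f := by
  obtain ⟨r, hr⟩ := h
  set q : Polynomial C := r.denom with hqdef
  set p : Polynomial C := r.num with hpdef
  set d : ℕ := q.natDegree with hddef
  set N : ℕ := p.natDegree with hNdef
  have hq0 : ((q : PowerSeries C) : LaurentSeries C) ≠ 0 := by
    intro h0
    have h2 : (q : PowerSeries C) = 0 :=
      HahnSeries.ofPowerSeries_injective (Γ := ℤ)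
        (by rw [h0]; exact (map_zero (HahnSeries.ofPowerSeries ℤ C)).symm)
    exact r.denom_ne_zero (Polynomial.coe_eq_zero_iff.mp h2)
  -- the fundamental relation over C
  have key : (r : LaurentSeries C) * ((q : PowerSeries C) : LaurentSeries C)
      = ((p : PowerSeries C) : LaurentSeries C) := by
    have e : (r : LaurentSeries C)
        = ((p : PowerSeries C) : LaurentSeries C) / ((q : PowerSeries C) : LaurentSeries C) := by
      rw [hpdef, hqdef, RatFunc.coe_coe, RatFunc.coe_coe,
        ← map_div₀]
      congr 1
      exact (RatFunc.num_div_denom r).symm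
    rw [e, div_mul_cancel₀]
    exact hq0
  -- recurrence over C at bad indices
  set ι : Type := {n : ℤ // n < 0 ∨ (N : ℤ) < n} with hιdef
  set v : ι → Fin (d + 1) → ℂ := fun i j => f.coeff ((i : ℤ) - (j : ℕ)) with hvdef
  have hsolC : ∀ i : ι, ∑ j : Fin (d + 1), algebraMap ℂ C (v i j) * q.coeff j = 0 := by
    intro i
    have h1 : ((r : LaurentSeries C) * ((q : PowerSeries C) : LaurentSeries C)).coeff (i : ℤ)
        = 0 := by
      rw [key]
      exact poly_coe_coeff_eq_zero p i.2
    rw [poly_coe_eq_sum_singles q (Nat.lt_succ_self d)] at h1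
    rw [coeff_mul_singles] at h1
    rw [← h1]
    refine Finset.sum_congr rfl fun j _ => ?_
    rw [hr]
  have hqC : (fun j : Fin (d + 1) => q.coeff j) ≠ 0 := by
    intro h0
    apply r.denom_ne_zero
    have : q.coeff d = 0 := congrFun h0 (Fin.last d)
    rw [← hqdef]
    rw [← Polynomial.leadingCoeff, Polynomial.leadingCoeff_eq_zero] at this
    exact this
  obtain ⟨q', hq'0, hq'sol⟩ := descent_aux v (fun j => q.coeff j) hqC hsolC
  -- build the polynomials over ℂ
  set Q : LaurentSeries ℂ := ∑ j : Fin (d + 1), HahnSeries.single ((j : ℕ) : ℤ) (q' j)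
    with hQdef
  have hcoeffs : ∀ n : ℤ, n < 0 ∨ (N : ℤ) < n → (f * Q).coeff n = 0 := by
    intro n hn
    rw [hQdef, coeff_mul_singles]
    exact hq'sol ⟨n, hn⟩
  -- denominator polynomial over ℂ
  set qp : Polynomial ℂ := ∑ j : Fin (d + 1), Polynomial.monomial (j : ℕ) (q' j) with hqpdef
  have hqpcoeff : ∀ j : Fin (d + 1), qp.coeff j = q' j := by
    intro j
    rw [hqpdef, Polynomial.finset_sum_coeff]
    rw [Finset.sum_eq_single j]
    · simp
    · intro b _ hb
      rw [Polynomial.coeff_monomial, if_neg]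
      intro hbj
      exact hb (Fin.ext hbj)
    · simp
  have hqpne : qp ≠ 0 := by
    intro h0
    apply hq'0
    funext j
    have := hqpcoeff j
    rw [h0] at this
    simpa using this.symm
  have hqpdeg : qp.natDegree < d + 1 := by
    rw [hqpdef]
    apply Nat.lt_succ_of_le
    apply le_trans (Polynomial.natDegree_sum_le _ _)
    simp only [Finset.fold_max_le]
    constructor
    · exact Nat.zero_le d
    · intro j _
      exact le_trans (Polynomial.natDegree_monomial_le _) (Nat.le_of_lt_succ j.2)
  have hQq : ((qp : PowerSeries ℂ) : LaurentSeries ℂ) = Q := by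
    rw [poly_coe_eq_sum_singles qp hqpdeg, hQdef]
    refine Finset.sum_congr rfl fun j _ => ?_
    rw [hqpcoeff]
  -- numerator polynomial over ℂ
  set pp : Polynomial ℂ := ∑ i ∈ Finset.range (N + 1), Polynomial.monomial i ((f * Q).coeff i)
    with hppdef
  have hP : ((pp : PowerSeries ℂ) : LaurentSeries ℂ) = f * Q := by
    ext n
    rw [PowerSeries.coeff_coe]
    rcases lt_or_ge n 0 with hn | hn
    · rw [if_pos hn]
      exact (hcoeffs n (Or.inl hn)).symm
    · rw [if_neg (not_lt.mpr hn), Polynomial.coeff_coe]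
      rw [hppdef, Polynomial.finset_sum_coeff]
      rcases le_or_gt n N with hnN | hnN
      · rw [Finset.sum_eq_single n.natAbs]
        · rw [Polynomial.coeff_monomial, if_pos rfl]
          congr 1
          omega
        · intro b _ hb
          rw [Polynomial.coeff_monomial, if_neg hb]
        · intro hmem
          exfalso
          apply hmem
          rw [Finset.mem_range]
          omega
      · rw [hcoeffs n (Or.inr hnN)]
        refine Finset.sum_eq_zero fun b hb => ?_
        rw [Finset.mem_range] at hb
        rw [Polynomial.coeff_monomial, if_neg (by omega)]
  -- assemble the rational function
  refine ⟨RatFunc.mk pp qp, ?_⟩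
  have hmk : (RatFunc.mk pp qp : RatFunc ℂ)
      = algebraMap (Polynomial ℂ) (RatFunc ℂ) pp / algebraMap (Polynomial ℂ) (RatFunc ℂ) qp :=
    RatFunc.mk_eq_div pp qp
  have hQne : Q ≠ 0 := by
    rw [← hQq]
    intro h0
    have h2 : (qp : PowerSeries ℂ) = 0 :=
      HahnSeries.ofPowerSeries_injective (Γ := ℤ)
        (by rw [h0]; exact (map_zero (HahnSeries.ofPowerSeries ℤ ℂ)).symm)
    exact hqpne (Polynomial.coe_eq_zero_iff.mp h2)
  have hcoe : ∀ P : Polynomial ℂ,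
      ((algebraMap (Polynomial ℂ) (RatFunc ℂ) P : RatFunc ℂ) : LaurentSeries ℂ)
        = ((P : PowerSeries ℂ) : LaurentSeries ℂ) := by
    intro P
    exact (RatFunc.coe_coe P).symm
  rw [hmk, map_div₀, hcoe, hcoe, hQq, hP]
  rw [mul_div_assoc, div_self hQne, mul_one]
end

section
/- Let K be a field, let f ∈ K[[x]] be a formal power series with coefficients in K, and let L be a field extension of K. If f is a rational function over L (i.e., there exist nonzero polynomials p, q ∈ L[x] with q·f = p in L[[x]]), then f is a rational function over K. -/
open PowerSeries

lemma aux_coe_sum {R : Type*} [CommRing R] {s : ℕ} (c : Fin (s+1) → R) :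
    ((∑ i : Fin (s+1), Polynomial.C (c i) * Polynomial.X ^ (i : ℕ) : Polynomial R) : PowerSeries R)
      = ∑ i : Fin (s+1), PowerSeries.C (c i) * PowerSeries.X ^ (i : ℕ) := by
  rw [show ((∑ i : Fin (s+1), Polynomial.C (c i) * Polynomial.X ^ (i : ℕ) : Polynomial R) : PowerSeries R)
      = Polynomial.coeToPowerSeries.ringHom (∑ i : Fin (s+1), Polynomial.C (c i) * Polynomial.X ^ (i : ℕ)) from rfl,
    map_sum]
  refine Finset.sum_congr rfl fun i _ => ?_
  show ((Polynomial.C (c i) * Polynomial.X ^ (i : ℕ) : Polynomial R) : PowerSeries R) = _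
  push_cast
  rfl

lemma aux_coeff {R : Type*} [CommRing R] {s : ℕ} (c : Fin (s+1) → R) (F : PowerSeries R) (n : ℕ) :
    PowerSeries.coeff (n + s)
      (((∑ i : Fin (s+1), Polynomial.C (c i) * Polynomial.X ^ (i : ℕ) : Polynomial R) : PowerSeries R) * F)
      = ∑ i : Fin (s+1), c i * PowerSeries.coeff (n + (s - (i : ℕ))) F := by
  rw [aux_coe_sum, Finset.sum_mul, map_sum]
  refine Finset.sum_congr rfl fun i _ => ?_
  rw [mul_assoc, PowerSeries.coeff_C_mul, PowerSeries.coeff_X_pow_mul']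
  rw [if_pos (by omega), show n + s - (i : ℕ) = n + (s - (i : ℕ)) by omega]

/-- Rationality of a power series descends along field extensions: if
`f ∈ K[[x]]` and there are polynomials `p, q ∈ L[x]`, `q ≠ 0`, with
`q · f = p` in `L[[x]]` (where `L ⊇ K`), then there are polynomials
`p', q' ∈ K[x]`, `q' ≠ 0`, with `q' · f = p'` in `K[[x]]`. -/
theorem stmt4 {K L : Type*} [Field K] [Field L] [Algebra K L]
    (f : PowerSeries K)
    (h : ∃ p q : Polynomial L, q ≠ 0 ∧
      (q : PowerSeries L) * PowerSeries.map (algebraMap K L) f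
        = (p : PowerSeries L)) :
    ∃ p q : Polynomial K, q ≠ 0 ∧
      (q : PowerSeries K) * f = (p : PowerSeries K) := by
  obtain ⟨p, q, hq, hpq⟩ := h
  set d := q.natDegree with hd
  set N := p.natDegree + 1 with hN
  set a : ℕ → K := fun n => PowerSeries.coeff n f with ha
  -- express q as a sum
  have hqsum : q = ∑ i : Fin (d+1), Polynomial.C (q.coeff (i : ℕ)) * Polynomial.X ^ (i : ℕ) := by
    simp_rw [Polynomial.C_mul_X_pow_eq_monomial]
    rw [Fin.sum_univ_eq_sum_range (fun j => Polynomial.monomial j (q.coeff j)) (d+1)]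
    exact q.as_sum_range' (d+1) (lt_add_one _)
  -- recurrence over L
  have hrecL : ∀ n, ∑ i : Fin (d+1),
      q.coeff (i : ℕ) * algebraMap K L (a (n + N + (d - (i : ℕ)))) = 0 := by
    intro n
    have h1 := aux_coeff (fun i : Fin (d+1) => q.coeff (i : ℕ))
      (PowerSeries.map (algebraMap K L) f) (n + N)
    rw [← hqsum, hpq, Polynomial.coeff_coe,
      Polynomial.coeff_eq_zero_of_natDegree_lt (by omega)] at h1
    simp only [PowerSeries.coeff_map] at h1
    exact h1.symm
  set w : ℕ → (Fin (d+1) → K) := fun n i => a (n + N + (d - (i : ℕ))) with hw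
  set W : Submodule K (Fin (d+1) → K) := Submodule.span K (Set.range w) with hW
  have hWlt : W < ⊤ := by
    rw [lt_top_iff_ne_top]
    intro hWtop
    set T : (Fin (d+1) → K) →ₗ[K] L :=
      ∑ i : Fin (d+1), (LinearMap.proj i : (Fin (d+1) → K) →ₗ[K] K).smulRight (q.coeff (i : ℕ))
      with hT
    have hTx : ∀ x, T x = ∑ i : Fin (d+1), q.coeff (i : ℕ) * algebraMap K L (x i) := by
      intro x
      rw [hT, LinearMap.sum_apply]
      refine Finset.sum_congr rfl fun i _ => ?_
      rw [LinearMap.smulRight_apply, LinearMap.proj_apply, Algebra.smul_def, mul_comm]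
    have hTw : ∀ n, T (w n) = 0 := fun n => by rw [hTx]; exact hrecL n
    have hker : W ≤ LinearMap.ker T := by
      rw [hW, Submodule.span_le]
      rintro _ ⟨n, rfl⟩
      exact hTw n
    have hT0 : T ((Pi.single (Fin.last d) (1 : K) : Fin (d+1) → K)) = 0 := by
      have : (Pi.single (Fin.last d) (1 : K) : Fin (d+1) → K) ∈ LinearMap.ker T := hker (hWtop ▸ Submodule.mem_top)
      exact this
    rw [hTx] at hT0
    have heval : ∑ i : Fin (d+1), q.coeff (i : ℕ) * algebraMap K L ((Pi.single (Fin.last d) (1:K) : Fin (d+1) → K) i)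
        = algebraMap K L 1 * q.coeff d := by
      rw [Finset.sum_eq_single (Fin.last d)]
      · simp [Fin.last]
      · intro i _ hi
        simp [Pi.single_apply, hi]
      · simp
    rw [heval] at hT0
    simp only [map_one, one_mul] at hT0
    exact Polynomial.leadingCoeff_ne_zero.mpr hq hT0
  obtain ⟨φ, hφ0, hφW⟩ := Submodule.exists_dual_map_eq_bot_of_lt_top hWlt inferInstance
  set cK : Fin (d+1) → K := fun i => φ (fun j => if i = j then 1 else 0) with hcK
  have hφeq : ∀ x, φ x = ∑ i : Fin (d+1), x i * cK i := by
    intro x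
    rw [LinearMap.pi_apply_eq_sum_univ φ x]
    simp [hcK, smul_eq_mul]
  have hrecK : ∀ n, ∑ i : Fin (d+1), cK i * a (n + N + (d - (i : ℕ))) = 0 := by
    intro n
    have hmem : φ (w n) ∈ W.map φ :=
      Submodule.mem_map_of_mem (Submodule.subset_span ⟨n, rfl⟩)
    rw [hφW, Submodule.mem_bot] at hmem
    rw [hφeq] at hmem
    rw [← hmem]
    exact Finset.sum_congr rfl fun i _ => mul_comm _ _
  have hjcK : ∃ j, cK j ≠ 0 := by
    by_contra hc
    push_neg at hc
    apply hφ0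
    apply LinearMap.ext
    intro x
    rw [hφeq]
    simp [hc]
  obtain ⟨j, hj⟩ := hjcK
  set q' : Polynomial K := ∑ i : Fin (d+1), Polynomial.C (cK i) * Polynomial.X ^ (i : ℕ) with hq'
  have hq'ne : q' ≠ 0 := by
    intro h0
    apply hj
    have : q'.coeff (j : ℕ) = cK j := by
      rw [hq', Polynomial.finset_sum_coeff]
      rw [Finset.sum_eq_single j]
      · simp
      · intro i _ hi
        simp only [Polynomial.coeff_C_mul, Polynomial.coeff_X_pow]
        rw [if_neg (by simpa [Fin.val_eq_val] using (Ne.symm hi)), mul_zero]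
      · simp
    rw [h0] at this
    simpa using this.symm
  have hvanish : ∀ k, N + d ≤ k → PowerSeries.coeff k ((q' : PowerSeries K) * f) = 0 := by
    intro k hk
    have hk' : k = (k - (N + d) + N) + d := by omega
    rw [hk', hq', aux_coeff]
    exact hrecK (k - (N + d))
  refine ⟨PowerSeries.trunc (N + d) ((q' : PowerSeries K) * f), q', hq'ne, ?_⟩
  ext k
  rw [Polynomial.coeff_coe, PowerSeries.coeff_trunc]
  by_cases hlt : k < N + d
  · rw [if_pos hlt]
  · rw [if_neg hlt]
    exact hvanish k (by omega)
end

section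
/- Let q ∈ ℂ* not a root of unity, c ∈ ℂ*, α ∈ ℚ, and let g be a nonzero Puiseux series in ⋃_{j≥1} ℂ((x^{1/j})) satisfying g(qx) = c x^α g(x). Then α = 0 and g = c_0 x^r for some c_0 ∈ ℂ* and r ∈ ℚ with q^r = c. -/
lemma cpow_inj_aux (q : ℂ) (hq0 : q ≠ 0)
    (hqru : ∀ m : ℕ, m ≠ 0 → q ^ m ≠ 1) (j : ℕ) (hj : 0 < j)
    (β β' : ℚ) (m m' : ℤ) (hβ : β = (m : ℚ) / (j : ℚ)) (hβ' : β' = (m' : ℚ) / (j : ℚ))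
    (h : q ^ (β : ℂ) = q ^ (β' : ℂ)) : β = β' := by
  rw [Complex.cpow_def_of_ne_zero hq0, Complex.cpow_def_of_ne_zero hq0,
    Complex.exp_eq_exp_iff_exists_int] at h
  obtain ⟨k, hk⟩ := h
  -- (β - β') * log q = k * (2π i)
  have hsub : ((β : ℂ) - (β' : ℂ)) * Complex.log q = (k : ℂ) * (2 * Real.pi * Complex.I) := by
    linear_combination hk
  have hjq : ((j : ℚ) : ℂ) ≠ 0 := by
    exact_mod_cast (Nat.cast_ne_zero (R := ℚ)).mpr hj.ne'
  have hβc : ((β : ℂ) - (β' : ℂ)) * (j : ℚ) = ((m - m' : ℤ) : ℂ) := by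
    have : (β - β') * (j : ℚ) = ((m - m' : ℤ) : ℚ) := by
      rw [hβ, hβ']
      field_simp
      exact (Int.cast_sub m m').symm
    push_cast at this ⊢
    exact_mod_cast congrArg (fun x : ℚ => (x : ℂ)) this
  -- exp ((m - m') * log q) = 1
  have hexp : Complex.exp (((m - m' : ℤ) : ℂ) * Complex.log q) = 1 := by
    have heq2 : ((m - m' : ℤ) : ℂ) * Complex.log q = ((k * j : ℤ) : ℂ) * (2 * Real.pi * Complex.I) := by
      push_cast
      push_cast at hβc
      linear_combination (j : ℂ) * hsub + Complex.log q * hβc.symm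
    rw [heq2, Complex.exp_int_mul_two_pi_mul_I]
  have hzpow : q ^ (m - m') = 1 := by
    have := Complex.exp_int_mul (Complex.log q) (m - m')
    rw [Complex.exp_log hq0] at this
    rw [← this, hexp]
  have hmm : m - m' = 0 := by
    by_contra hne
    have hnat : q ^ (m - m').natAbs = 1 := by
      rcases Int.natAbs_eq (m - m') with h1 | h1
      · have : q ^ ((m - m').natAbs : ℤ) = 1 := by rw [← h1]; exact hzpow
        exact_mod_cast this
      · have : q ^ ((m - m').natAbs : ℤ) = 1 := by
          rw [show ((m - m').natAbs : ℤ) = -(m - m') by omega, zpow_neg, hzpow]; simp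
        exact_mod_cast this
    exact hqru _ (by omega) hnat
  have : (m : ℚ) = m' := by exact_mod_cast congrArg (fun n : ℤ => (n : ℚ)) (by omega : m = m')
  rw [hβ, hβ', this]

/-- Let `q ∈ ℂ*` not be a root of unity, `c ∈ ℂ*`, `α ∈ ℚ`, and let
`g = ∑ a_β x^β` be a nonzero Puiseux series (a Hahn series over `ℚ` with
support in `(1/j)ℤ`) satisfying `g(qx) = c x^α g(x)`, i.e. coefficientwise
`q^β a_β = c a_{β-α}`. Then `α = 0` and `g = c₀ x^r` is a monomial, with
`c₀ ∈ ℂ*` and `r ∈ ℚ` satisfying `q^r = c`. -/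
theorem stmt11 (q : ℂ) (hq0 : q ≠ 0)
    (hqru : ∀ m : ℕ, m ≠ 0 → q ^ m ≠ 1)
    (c : ℂ) (hc : c ≠ 0) (α : ℚ)
    (g : HahnSeries ℚ ℂ) (hg : g ≠ 0) (j : ℕ) (hj : 0 < j)
    (hsupp : ∀ β ∈ g.support, ∃ m : ℤ, β = (m : ℚ) / (j : ℚ))
    (heq : ∀ β : ℚ, q ^ (β : ℂ) * g.coeff β = c * g.coeff (β - α)) :
    α = 0 ∧ ∃ (r : ℚ) (c₀ : ℂ), c₀ ≠ 0 ∧ q ^ (r : ℂ) = c ∧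
      ∀ β : ℚ, g.coeff β = if β = r then c₀ else 0 := by
  have hcpow : ∀ β : ℚ, q ^ (β : ℂ) ≠ 0 := fun β => by
    rw [Complex.cpow_def_of_ne_zero hq0]; exact Complex.exp_ne_zero _
  set r := g.order with hr
  have hgr : g.coeff r ≠ 0 := HahnSeries.coeff_order_eq_zero.not.mpr hg
  have hlt : ∀ β : ℚ, β < r → g.coeff β = 0 := fun β hβ =>
    HahnSeries.coeff_eq_zero_of_lt_order hβ
  have hα : α = 0 := by
    by_contra hα
    rcases lt_or_gt_of_ne hα with h | h
    · -- α < 0 : use heq at r + α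
      have h1 := heq (r + α)
      rw [add_sub_cancel_right] at h1
      have : g.coeff (r + α) ≠ 0 := by
        intro h0
        rw [h0, mul_zero] at h1
        exact mul_ne_zero hc hgr h1.symm
      exact this (hlt _ (by linarith))
    · -- α > 0 : use heq at r
      have h1 := heq r
      have : g.coeff (r - α) ≠ 0 := by
        intro h0
        rw [h0, mul_zero] at h1
        exact mul_ne_zero (hcpow r) hgr h1
      exact this (hlt _ (by linarith))
  subst hα
  refine ⟨rfl, r, g.coeff r, hgr, ?_, ?_⟩
  · have h1 := heq r
    rw [sub_zero] at h1
    exact mul_right_cancel₀ hgr h1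
  · intro β
    split_ifs with hβ
    · rw [hβ]
    · by_contra h0
      have hβs : β ∈ g.support := h0
      have hrs : r ∈ g.support := hgr
      obtain ⟨m, hm⟩ := hsupp β hβs
      obtain ⟨m', hm'⟩ := hsupp r hrs
      have h1 := heq β
      rw [sub_zero] at h1
      have h2 := heq r
      rw [sub_zero] at h2
      have hqβ : q ^ (β : ℂ) = c := mul_right_cancel₀ h0 h1
      have hqr : q ^ (r : ℂ) = c := mul_right_cancel₀ hgr h2
      exact hβ (cpow_inj_aux q hq0 hqru j hj β r m m' hm hm' (hqβ.trans hqr.symm))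
end

section
/- Let h ∈ ℂ*, and let Γ denote the Gamma function, which satisfies Γ(x+1) = xΓ(x) and is transcendental over ℂ(x). Let F_0 = ℂ(x, Γ(x)) ⊆ Mer(ℂ) with the automorphism ρ(f)(x) = f(x+1). Then the field of ρ-constants of F_0 is ℂ: if β ∈ ℂ(x, Γ) satisfies β(x+1) = β(x), then β ∈ ℂ. -/
set_option maxHeartbeats 1000000
set_option synthInstance.maxHeartbeats 1000000

open Polynomial

noncomputable section StmtAux

/-- shift `P(x) ↦ P(x+1)` on `ℂ[X]`. -/
def shiftPoly : Polynomial ℂ →+* Polynomial ℂ :=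
  (Polynomial.aeval (Polynomial.X + Polynomial.C 1)).toRingHom

lemma shiftPoly_apply (P : Polynomial ℂ) : shiftPoly P = P.comp (X + C 1) := by
  simp [shiftPoly, aeval_def, Polynomial.comp, Polynomial.algebraMap_eq]

lemma shiftPoly_injective : Function.Injective shiftPoly := by
  intro a b h
  have h2 : (a - b).comp (X + C 1) = 0 := by
    rw [sub_comp, ← shiftPoly_apply, ← shiftPoly_apply, h, sub_self]
  exact sub_eq_zero.mp (Polynomial.comp_X_add_C_eq_zero_iff.mp h2)

lemma g_injective : Function.Injective ((algebraMap (Polynomial ℂ) (RatFunc ℂ)).comp shiftPoly) :=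
  (RatFunc.algebraMap_injective ℂ).comp shiftPoly_injective

/-- The shift automorphism `σ : ℂ(x) → ℂ(x)`, `x ↦ x + 1`. -/
def shiftK : RatFunc ℂ →+* RatFunc ℂ := IsFractionRing.lift g_injective

lemma shiftK_algebraMap (P : Polynomial ℂ) :
    shiftK (algebraMap (Polynomial ℂ) (RatFunc ℂ) P)
      = algebraMap (Polynomial ℂ) (RatFunc ℂ) (P.comp (X + C 1)) := by
  rw [shiftK, IsFractionRing.lift_algebraMap, RingHom.comp_apply, shiftPoly_apply]

lemma algMap_C (c : ℂ) :
    algebraMap (Polynomial ℂ) (RatFunc ℂ) (C c) = algebraMap ℂ (RatFunc ℂ) c := by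
  rw [IsScalarTower.algebraMap_apply ℂ (Polynomial ℂ) (RatFunc ℂ), Polynomial.algebraMap_eq]

/-- A polynomial invariant under the shift is constant. -/
lemma const_of_shift_fixed (P : Polynomial ℂ) (h : P.comp (X + C 1) = P) :
    P = C (P.coeff 0) := by
  have key : ∀ n : ℕ, P.eval (n : ℂ) = P.eval 0 := by
    intro n
    induction n with
    | zero => simp
    | succ k ih =>
      have h1 := congrArg (Polynomial.eval ((k : ℕ) : ℂ)) h
      rw [eval_comp] at h1
      simp only [eval_add, eval_X, eval_C] at h1
      push_cast
      rw [h1]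
      exact ih
  have h0 : P - C (P.eval 0) = 0 := by
    apply Polynomial.eq_zero_of_infinite_isRoot
    apply Set.infinite_of_injective_forall_mem (f := fun n : ℕ => (n : ℂ)) Nat.cast_injective
    intro n
    simp only [Set.mem_setOf_eq, IsRoot, eval_sub, eval_C, key n, sub_self]
  have hP : P = C (P.eval 0) := sub_eq_zero.mp h0
  rw [Polynomial.coeff_zero_eq_eval_zero]
  exact hP

lemma shiftK_const (c : ℂ) :
    shiftK (algebraMap ℂ (RatFunc ℂ) c) = algebraMap ℂ (RatFunc ℂ) c := by
  rw [← algMap_C, shiftK_algebraMap, Polynomial.C_comp]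

lemma shiftK_X : shiftK RatFunc.X = RatFunc.X + 1 := by
  rw [← RatFunc.algebraMap_X, shiftK_algebraMap, Polynomial.X_comp, map_add,
    RatFunc.algebraMap_X, algMap_C, map_one]

/-- Step B: a shift-invariant rational function is a constant. -/
lemma const_of_shiftK_fixed (a : RatFunc ℂ) (ha : shiftK a = a) :
    ∃ c : ℂ, a = algebraMap ℂ (RatFunc ℂ) c := by
  have hQ0 : a.denom ≠ 0 := a.denom_ne_zero
  have hrepr := a.num_div_denom
  have hσ : shiftK a
      = algebraMap _ _ (a.num.comp (X + C 1)) / algebraMap _ _ (a.denom.comp (X + C 1)) := by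
    conv_lhs => rw [← hrepr]
    rw [map_div₀, shiftK_algebraMap, shiftK_algebraMap]
  have hQc0 : a.denom.comp (X + C 1) ≠ 0 := comp_X_add_C_ne_zero_iff.mpr hQ0
  have heq : algebraMap _ _ (a.num.comp (X + C 1)) / algebraMap _ _ (a.denom.comp (X + C 1))
      = algebraMap (Polynomial ℂ) (RatFunc ℂ) a.num / algebraMap _ _ a.denom :=
    (hσ.symm.trans ha).trans hrepr.symm
  rw [div_eq_div_iff (RatFunc.algebraMap_ne_zero hQc0)
    (RatFunc.algebraMap_ne_zero hQ0), ← map_mul, ← map_mul] at heq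
  have cross : a.num.comp (X + C 1) * a.denom = a.num * a.denom.comp (X + C 1) :=
    RatFunc.algebraMap_injective ℂ heq
  have hdvd : a.denom ∣ a.denom.comp (X + C 1) := by
    refine (a.isCoprime_num_denom.symm).dvd_of_dvd_mul_left ⟨a.num.comp (X + C 1), ?_⟩
    rw [← cross]; ring
  obtain ⟨r, hr⟩ := hdvd
  have hQcMonic : (a.denom.comp (X + C 1)).Monic := (a.monic_denom).comp_X_add_C 1
  have hQc_deg : (a.denom.comp (X + C 1)).natDegree = a.denom.natDegree := by
    rw [natDegree_comp, natDegree_X_add_C, mul_one]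
  have hr0 : r ≠ 0 := by
    rintro rfl
    rw [mul_zero] at hr
    exact hQcMonic.ne_zero hr
  have hrdeg : r.natDegree = 0 := by
    have := hQc_deg
    rw [hr, natDegree_mul hQ0 hr0] at this
    omega
  have hrmonic : r.Monic := by
    have h1 : a.denom.leadingCoeff * r.leadingCoeff = 1 := by
      rw [← leadingCoeff_mul, ← hr]; exact hQcMonic
    rwa [(a.monic_denom).leadingCoeff, one_mul] at h1
  have hr1 : r = 1 := (hrmonic.natDegree_eq_zero).mp hrdeg
  rw [hr1, mul_one] at hr
  have hPfix : a.num.comp (X + C 1) = a.num := by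
    rw [hr] at cross
    exact mul_right_cancel₀ hQ0 cross
  have hQconst := const_of_shift_fixed a.denom hr
  have hQ1 : a.denom = 1 := by
    have : a.denom.natDegree = 0 := by rw [hQconst]; exact natDegree_C _
    exact (a.monic_denom).natDegree_eq_zero.mp this
  have hPconst := const_of_shift_fixed a.num hPfix
  refine ⟨a.num.coeff 0, ?_⟩
  conv_lhs => rw [← hrepr, hQ1, hPconst]
  rw [map_one, div_one, algMap_C]

/-- The action `τ` on `K[T]`: coefficients shifted, `T ↦ x·T`. -/
def tauP : Polynomial (RatFunc ℂ) →+* Polynomial (RatFunc ℂ) :=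
  Polynomial.eval₂RingHom (Polynomial.C.comp shiftK) (Polynomial.C RatFunc.X * Polynomial.X)

lemma tauP_coeff (f : Polynomial (RatFunc ℂ)) (i : ℕ) :
    (tauP f).coeff i = shiftK (f.coeff i) * RatFunc.X ^ i := by
  induction f using Polynomial.induction_on' with
  | add p q hp hq => simp [coeff_add, hp, hq, add_mul]
  | monomial n c =>
    have h1 : tauP (monomial n c) = C (shiftK c * RatFunc.X ^ n) * X ^ n := by
      simp only [tauP, coe_eval₂RingHom, eval₂_monomial, RingHom.comp_apply, mul_pow, ← C_pow,
        C_mul]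
      ring
    rw [h1, coeff_C_mul, coeff_X_pow, coeff_monomial]
    by_cases h : i = n
    · subst h; simp
    · simp [h, Ne.symm h]

lemma tauP_eq_zero_iff (f : Polynomial (RatFunc ℂ)) : tauP f = 0 ↔ f = 0 := by
  constructor
  · intro h
    ext i
    have h1 := congrArg (fun g => Polynomial.coeff g i) h
    simp only [tauP_coeff, coeff_zero] at h1
    rcases mul_eq_zero.mp h1 with h2 | h2
    · simpa using (map_eq_zero_iff shiftK shiftK.injective).mp h2
    · exact absurd h2 (pow_ne_zero _ RatFunc.X_ne_zero)
  · rintro rfl; exact map_zero _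

lemma tauP_natDegree (f : Polynomial (RatFunc ℂ)) : (tauP f).natDegree = f.natDegree := by
  apply le_antisymm
  · rw [natDegree_le_iff_coeff_eq_zero]
    intro m hm
    rw [tauP_coeff, coeff_eq_zero_of_natDegree_lt hm, map_zero, zero_mul]
  · rw [natDegree_le_iff_coeff_eq_zero]
    intro m hm
    have h1 := coeff_eq_zero_of_natDegree_lt hm
    rw [tauP_coeff] at h1
    rcases mul_eq_zero.mp h1 with h2 | h2
    · exact (map_eq_zero_iff shiftK shiftK.injective).mp h2
    · exact absurd h2 (pow_ne_zero _ RatFunc.X_ne_zero)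

/-- The degree comparison: `σ(b)·xⁱ = b·xⁿ` with `b ≠ 0` forces `i = n`. -/
lemma eq_of_shiftK_X_pow {b : RatFunc ℂ} (hb : b ≠ 0) {i n : ℕ}
    (h : shiftK b * RatFunc.X ^ i = b * RatFunc.X ^ n) : i = n := by
  have hP0 : b.num ≠ 0 := RatFunc.num_ne_zero hb
  have hQ0 : b.denom ≠ 0 := b.denom_ne_zero
  have hrepr := b.num_div_denom
  have hσ : shiftK b
      = algebraMap _ _ (b.num.comp (X + C 1)) / algebraMap _ _ (b.denom.comp (X + C 1)) := by
    conv_lhs => rw [← hrepr]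
    rw [map_div₀, shiftK_algebraMap, shiftK_algebraMap]
  have hPc0 : b.num.comp (X + C 1) ≠ 0 := comp_X_add_C_ne_zero_iff.mpr hP0
  have hQc0 : b.denom.comp (X + C 1) ≠ 0 := comp_X_add_C_ne_zero_iff.mpr hQ0
  have hX : (RatFunc.X : RatFunc ℂ) = algebraMap (Polynomial ℂ) (RatFunc ℂ) X :=
    (RatFunc.algebraMap_X).symm
  have h2 : algebraMap _ _ (b.num.comp (X + C 1)) / algebraMap _ _ (b.denom.comp (X + C 1))
        * RatFunc.X ^ i
      = algebraMap (Polynomial ℂ) (RatFunc ℂ) b.num / algebraMap _ _ b.denom * RatFunc.X ^ n := by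
    rw [← hσ, hrepr]; exact h
  rw [div_mul_eq_mul_div, div_mul_eq_mul_div,
    div_eq_div_iff (RatFunc.algebraMap_ne_zero hQc0) (RatFunc.algebraMap_ne_zero hQ0)] at h2
  have cross : b.num.comp (X + C 1) * X ^ i * b.denom
      = b.num * X ^ n * b.denom.comp (X + C 1) := by
    apply RatFunc.algebraMap_injective ℂ
    rw [map_mul, map_mul, map_mul, map_mul, map_pow, map_pow, ← hX]
    exact h2
  have hdeg := congrArg natDegree cross
  rw [natDegree_mul (mul_ne_zero hPc0 (pow_ne_zero _ X_ne_zero)) hQ0,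
    natDegree_mul hPc0 (pow_ne_zero _ X_ne_zero),
    natDegree_mul (mul_ne_zero hP0 (pow_ne_zero _ X_ne_zero)) hQc0,
    natDegree_mul hP0 (pow_ne_zero _ X_ne_zero),
    natDegree_pow, natDegree_pow, natDegree_X, natDegree_comp, natDegree_comp,
    natDegree_X_add_C, mul_one, mul_one] at hdeg
  omega

end StmtAux

/-- Hölder-type constancy: model `F₀ = ℂ(x, Γ) ≅ ℂ(x)(T)` (Γ transcendental
over `ℂ(x)`) as `RatFunc (RatFunc ℂ)`, with inner variable `x` and outer
variable `T` playing the role of `Γ`. Let `ρ` be a field automorphism with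
`ρ(x) = x + 1`, `ρ(T) = x·T` (the functional equation `Γ(x+1) = xΓ(x)`),
fixing `ℂ` pointwise. Then every `ρ`-constant `β ∈ ℂ(x, Γ)` is a complex
constant. -/
theorem stmt14
    (ρ : RatFunc (RatFunc ℂ) ≃+* RatFunc (RatFunc ℂ))
    (hx : ρ (algebraMap (RatFunc ℂ) (RatFunc (RatFunc ℂ)) RatFunc.X)
        = algebraMap (RatFunc ℂ) (RatFunc (RatFunc ℂ)) (RatFunc.X + 1))
    (hT : ρ (RatFunc.X : RatFunc (RatFunc ℂ))
        = algebraMap (RatFunc ℂ) (RatFunc (RatFunc ℂ)) RatFunc.X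
          * (RatFunc.X : RatFunc (RatFunc ℂ)))
    (hC : ∀ c : ℂ,
      ρ (algebraMap (RatFunc ℂ) (RatFunc (RatFunc ℂ)) (algebraMap ℂ (RatFunc ℂ) c))
        = algebraMap (RatFunc ℂ) (RatFunc (RatFunc ℂ)) (algebraMap ℂ (RatFunc ℂ) c)) :
    ∀ β : RatFunc (RatFunc ℂ), ρ β = β →
      ∃ c : ℂ, β = algebraMap (RatFunc ℂ) (RatFunc (RatFunc ℂ))
        (algebraMap ℂ (RatFunc ℂ) c) := by
  classical
  -- L1 : ρ ∘ algebraMap K _ = algebraMap K _ ∘ σ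
  have L1 : (ρ : RatFunc (RatFunc ℂ) →+* RatFunc (RatFunc ℂ)).comp
        (algebraMap (RatFunc ℂ) (RatFunc (RatFunc ℂ)))
      = (algebraMap (RatFunc ℂ) (RatFunc (RatFunc ℂ))).comp shiftK := by
    apply IsLocalization.ringHom_ext (nonZeroDivisors (Polynomial ℂ))
    apply Polynomial.ringHom_ext
    · intro a
      simp only [RingHom.comp_apply, RingEquiv.coe_toRingHom, algMap_C, shiftK_const]
      exact hC a
    · simp only [RingHom.comp_apply, RingEquiv.coe_toRingHom, RatFunc.algebraMap_X, shiftK_X]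
      exact hx
  have L1' : ∀ a : RatFunc ℂ, ρ (algebraMap (RatFunc ℂ) (RatFunc (RatFunc ℂ)) a)
      = algebraMap (RatFunc ℂ) (RatFunc (RatFunc ℂ)) (shiftK a) := fun a =>
    RingHom.congr_fun L1 a
  -- L2 : ρ ∘ algebraMap K[T] _ = algebraMap K[T] _ ∘ τ
  have L2 : (ρ : RatFunc (RatFunc ℂ) →+* RatFunc (RatFunc ℂ)).comp
        (algebraMap (Polynomial (RatFunc ℂ)) (RatFunc (RatFunc ℂ)))
      = (algebraMap (Polynomial (RatFunc ℂ)) (RatFunc (RatFunc ℂ))).comp tauP := by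
    apply Polynomial.ringHom_ext
    · intro a
      simp only [RingHom.comp_apply, RingEquiv.coe_toRingHom]
      rw [show (tauP (C a)) = C (shiftK a) from eval₂_C _ _, RatFunc.algebraMap_C,
        RatFunc.algebraMap_C, ← RatFunc.algebraMap_eq_C]
      exact L1' a
    · simp only [RingHom.comp_apply, RingEquiv.coe_toRingHom]
      rw [show (tauP X) = C RatFunc.X * X from eval₂_X _ _, RatFunc.algebraMap_X, hT,
        map_mul, RatFunc.algebraMap_C, RatFunc.algebraMap_X, ← RatFunc.algebraMap_eq_C]
  have L2' : ∀ f : Polynomial (RatFunc ℂ),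
      ρ (algebraMap (Polynomial (RatFunc ℂ)) (RatFunc (RatFunc ℂ)) f)
      = algebraMap (Polynomial (RatFunc ℂ)) (RatFunc (RatFunc ℂ)) (tauP f) := fun f =>
    RingHom.congr_fun L2 f
  intro β hβ
  set p := β.num with hp_def
  set q := β.denom with hq_def
  have hq0 : q ≠ 0 := β.denom_ne_zero
  have hτq0 : tauP q ≠ 0 := fun h => hq0 ((tauP_eq_zero_iff q).mp h)
  have hrepr := β.num_div_denom
  have hβ2 : algebraMap (Polynomial (RatFunc ℂ)) (RatFunc (RatFunc ℂ)) (tauP p)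
        / algebraMap (Polynomial (RatFunc ℂ)) (RatFunc (RatFunc ℂ)) (tauP q)
      = algebraMap (Polynomial (RatFunc ℂ)) (RatFunc (RatFunc ℂ)) p
        / algebraMap (Polynomial (RatFunc ℂ)) (RatFunc (RatFunc ℂ)) q := by
    rw [← L2', ← L2']
    have e1 := map_div₀ ρ (algebraMap (Polynomial (RatFunc ℂ)) (RatFunc (RatFunc ℂ)) p)
      (algebraMap (Polynomial (RatFunc ℂ)) (RatFunc (RatFunc ℂ)) q)
    rw [← e1, hrepr]
    exact hβ
  have cross : tauP p * q = p * tauP q := by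
    apply RatFunc.algebraMap_injective (RatFunc ℂ)
    rw [map_mul, map_mul]
    exact (div_eq_div_iff (G₀ := RatFunc (RatFunc ℂ)) (RatFunc.algebraMap_ne_zero hτq0)
      (RatFunc.algebraMap_ne_zero hq0)).mp hβ2
  -- q divides τ q
  have hdvd : q ∣ tauP q := by
    refine (β.isCoprime_num_denom.symm).dvd_of_dvd_mul_left ⟨tauP p, ?_⟩
    rw [← cross]; ring
  obtain ⟨r, hr⟩ := hdvd
  have hr0 : r ≠ 0 := by rintro rfl; rw [mul_zero] at hr; exact hτq0 hr
  have hrdeg : r.natDegree = 0 := by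
    have h1 := tauP_natDegree q
    rw [hr, natDegree_mul hq0 hr0] at h1
    omega
  have hrC : r = C (r.coeff 0) := eq_C_of_natDegree_eq_zero hrdeg
  set n := q.natDegree with hn_def
  set c := r.coeff 0 with hc_def
  have hcoefq : ∀ i, shiftK (q.coeff i) * RatFunc.X ^ i = q.coeff i * c := by
    intro i
    have h1 := congrArg (fun g => Polynomial.coeff g i) hr
    simp only [tauP_coeff] at h1
    rw [h1, hrC, coeff_mul_C]
  have hqmonic : q.Monic := β.monic_denom
  have hc : c = RatFunc.X ^ n := by
    have h1 := hcoefq n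
    rw [hn_def] at h1
    rw [Polynomial.coeff_natDegree, hqmonic.leadingCoeff] at h1
    simpa using h1.symm
  have hqi : ∀ i, q.coeff i ≠ 0 → i = n := by
    intro i hi
    apply eq_of_shiftK_X_pow hi
    rw [hcoefq i, hc]
  have hq_eq : q = X ^ n := by
    ext i
    rw [coeff_X_pow]
    by_cases h : i = n
    · subst h
      simp [hn_def, hqmonic.coeff_natDegree]
    · rw [if_neg h]
      by_contra hne
      exact h (hqi i hne)
  have hτp : tauP p = p * C (RatFunc.X ^ n) := by
    have h1 : tauP p * q = (p * C (RatFunc.X ^ n)) * q := by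
      rw [cross, hr, hrC, hc]; ring
    exact mul_right_cancel₀ hq0 h1
  have hcoefp : ∀ i, shiftK (p.coeff i) * RatFunc.X ^ i = p.coeff i * RatFunc.X ^ n := by
    intro i
    have h1 := congrArg (fun g => Polynomial.coeff g i) hτp
    simp only [tauP_coeff] at h1
    rw [h1, coeff_mul_C]
  have hpi : ∀ i, p.coeff i ≠ 0 → i = n := fun i hi => eq_of_shiftK_X_pow hi (hcoefp i)
  set a := p.coeff n with ha_def
  have hσa : shiftK a = a := by
    have h1 := hcoefp n
    exact mul_right_cancel₀ (pow_ne_zero _ RatFunc.X_ne_zero) h1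
  have hp_eq : p = C a * X ^ n := by
    ext i
    rw [coeff_C_mul, coeff_X_pow]
    by_cases h : i = n
    · subst h; simp [ha_def]
    · rw [if_neg h, mul_zero]
      by_contra hne
      exact h (hpi i hne)
  have hβa : β = algebraMap (RatFunc ℂ) (RatFunc (RatFunc ℂ)) a := by
    rw [← hrepr, ← hp_def, ← hq_def, hp_eq, hq_eq, map_mul, mul_div_assoc,
      div_self (RatFunc.algebraMap_ne_zero (pow_ne_zero _ X_ne_zero)), mul_one,
      RatFunc.algebraMap_C, ← RatFunc.algebraMap_eq_C]
  obtain ⟨c0, hc0⟩ := const_of_shiftK_fixed a hσa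
  exact ⟨c0, by rw [hβa, hc0]⟩
end
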